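/- The sum, over all connected adjacency maps f of G, of (number of periodic points of f) times the weight of f, equals 2 · (Σ_{{u,v} ∈ E} w(u,v)) · F₁(G), where F₁(G) is the weighted sum of spanning trees of G. (Bijectively: marked oriented cycle-rooted spanning trees correspond to pairs consisting of a spanning tree and a directed edge.) -/

import Mathlib

open scoped Classical
open Finset SimpleGraph

namespace Stmt6Aux

variable {V : Type*} [Fintype V] [DecidableEq V]

/-- Edges of the functional graph of `f`, one per non-marked vertex. -/
noncomputable def Tof (f : V → V) (v : V) : Finset (Sym2 V) :=
  (Finset.univ.erase v).image (fun x => s(x, f x))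

section FSide

variable {G : SimpleGraph V} {f : V → V} {v : V}

lemma reach_of_walk (hv : ∃ k, 1 ≤ k ∧ f^[k] v = v) :
    ∀ {x : V}, (SimpleGraph.fromEdgeSet (Set.range fun x => s(x, f x))).Walk x v →
      ∃ k, f^[k] x = v := by
  obtain ⟨m, hm1, hmv⟩ := hv
  have fwd : ∀ y : V, (∃ k, f^[k] y = v) → ∃ k, f^[k] (f y) = v := by
    rintro y ⟨k, hk⟩
    rcases k with _ | j
    · simp only [Function.iterate_zero, id_eq] at hk
      subst hk
      refine ⟨m - 1, ?_⟩
      rw [← Function.iterate_succ_apply, Nat.succ_eq_add_one, Nat.sub_add_cancel hm1, hmv]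
    · exact ⟨j, by rw [← Function.iterate_succ_apply]; exact hk⟩
  intro x p
  induction p with
  | nil => exact ⟨0, rfl⟩
  | @cons a b _ h q ih =>
    obtain ⟨he, -⟩ := ((SimpleGraph.fromEdgeSet_adj _).mp h)
    obtain ⟨z, hz⟩ := he
    rw [Sym2.eq_iff] at hz
    have ih' := ih hmv fwd
    rcases hz with ⟨hz1, hz2⟩ | ⟨hz1, hz2⟩
    · -- z = a, f z = b
      obtain ⟨k, hk⟩ := ih'
      exact ⟨k + 1, by subst hz1; rw [Function.iterate_succ_apply, hz2, hk]⟩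
    · -- z = b, f z = a, i.e. a = f b
      subst hz1
      have := fwd z ih'
      rw [hz2] at this
      exact this

lemma reaches (hf2 : (SimpleGraph.fromEdgeSet (Set.range fun x => s(x, f x))).Connected)
    (hv : ∃ k, 1 ≤ k ∧ f^[k] v = v) (x : V) : ∃ k, f^[k] x = v := by
  obtain ⟨p⟩ := hf2.preconnected x v
  exact reach_of_walk hv p

lemma injOn_edge (hf2 : (SimpleGraph.fromEdgeSet (Set.range fun x => s(x, f x))).Connected)
    (hv : ∃ k, 1 ≤ k ∧ f^[k] v = v) :
    ∀ x ∈ Finset.univ.erase v, ∀ y ∈ Finset.univ.erase v,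
      s(x, f x) = s(y, f y) → x = y := by
  intro x hx y hy hxy
  by_contra hne
  rw [Sym2.eq_iff] at hxy
  rcases hxy with ⟨h1, -⟩ | ⟨h1, h2⟩
  · exact hne h1
  -- x = f y, f x = y : a 2-cycle
  have horb : ∀ k, f^[k] x = x ∨ f^[k] x = y := by
    intro k
    induction k with
    | zero => exact Or.inl rfl
    | succ n ih =>
      rcases ih with h | h
      · right; rw [Function.iterate_succ_apply', h, h2]
      · left; rw [Function.iterate_succ_apply', h, ← h1]
  obtain ⟨k, hk⟩ := reaches hf2 hv x
  rcases horb k with h | h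
  · exact (Finset.mem_erase.mp hx).1 (by rw [← hk, h])
  · exact (Finset.mem_erase.mp hy).1 (by rw [← hk, h])

lemma exists_orbit_path (hf1 : ∀ x, G.Adj x (f x)) :
    ∀ (k : ℕ) (x : V), f^[k] x = v → (∀ j < k, f^[j] x ≠ v) →
      ∃ p : (SimpleGraph.fromEdgeSet ((Tof f v : Finset (Sym2 V)) : Set (Sym2 V))).Walk x v,
        p.IsPath ∧ (∀ y ∈ p.support, ∃ j ≤ k, f^[j] x = y) ∧ (0 < k → p.getVert 1 = f x) := by
  intro k
  induction k with
  | zero =>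
    intro x hk _
    simp only [Function.iterate_zero, id_eq] at hk
    subst hk
    exact ⟨SimpleGraph.Walk.nil, SimpleGraph.Walk.IsPath.nil, by
      intro y hy
      simp only [SimpleGraph.Walk.support_nil, List.mem_singleton] at hy
      exact ⟨0, le_refl _, hy.symm⟩, by intro h; exact absurd h (lt_irrefl 0)⟩
  | succ k ih =>
    intro x hk hmin
    have hx0 : x ≠ v := by simpa using hmin 0 (Nat.succ_pos k)
    have hk' : f^[k] (f x) = v := by rw [← Function.iterate_succ_apply]; exact hk
    have hmin' : ∀ j < k, f^[j] (f x) ≠ v := by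
      intro j hj hji
      exact hmin (j + 1) (by omega) (by rw [Function.iterate_succ_apply]; exact hji)
    obtain ⟨p, hp, hsupp, -⟩ := ih (f x) hk' hmin'
    have hAdj : (SimpleGraph.fromEdgeSet ((Tof f v : Finset (Sym2 V)) : Set (Sym2 V))).Adj x (f x) := by
      rw [SimpleGraph.fromEdgeSet_adj]
      refine ⟨?_, G.ne_of_adj (hf1 x)⟩
      simp only [Finset.mem_coe, Tof, Finset.mem_image]
      exact ⟨x, Finset.mem_erase.mpr ⟨hx0, Finset.mem_univ x⟩, rfl⟩
    have hxns : x ∉ p.support := by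
      intro hxs
      obtain ⟨j, hj, hfj⟩ := hsupp x hxs
      -- f^[j] (f x) = x, so x is periodic with period j+1
      have hper : f^[j + 1] x = x := by rw [Function.iterate_succ_apply]; exact hfj
      have : f^[k - j] x = v := by
        have : f^[(k - j) + (j + 1)] x = v := by rw [(by omega : (k - j) + (j + 1) = k + 1)]; exact hk
        rwa [Function.iterate_add_apply, hper] at this
      exact hmin (k - j) (by omega) this
    refine ⟨SimpleGraph.Walk.cons hAdj p, hp.cons hxns, ?_, ?_⟩
    · intro y hy
      rw [SimpleGraph.Walk.support_cons, List.mem_cons] at hy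
      rcases hy with rfl | hy
      · exact ⟨0, Nat.zero_le _, rfl⟩
      · obtain ⟨j, hj, hfj⟩ := hsupp y hy
        exact ⟨j + 1, by omega, by rw [Function.iterate_succ_apply]; exact hfj⟩
    · intro _
      rw [SimpleGraph.Walk.getVert_cons_succ, SimpleGraph.Walk.getVert_zero]

lemma Tof_connected (hf1 : ∀ x, G.Adj x (f x))
    (hf2 : (SimpleGraph.fromEdgeSet (Set.range fun x => s(x, f x))).Connected)
    (hv : ∃ k, 1 ≤ k ∧ f^[k] v = v) :
    (SimpleGraph.fromEdgeSet ((Tof f v : Finset (Sym2 V)) : Set (Sym2 V))).Connected := by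
  have hreach : ∀ x : V,
      (SimpleGraph.fromEdgeSet ((Tof f v : Finset (Sym2 V)) : Set (Sym2 V))).Reachable x v := by
    intro x
    have hex := reaches hf2 hv x
    obtain ⟨p, -, -, -⟩ := exists_orbit_path hf1 (Nat.find hex) x (Nat.find_spec hex)
      (fun j hj => Nat.find_min hex hj)
    exact ⟨p⟩
  haveI : Nonempty V := ⟨v⟩
  exact ⟨fun x y => (hreach x).trans (hreach y).symm⟩

lemma Tof_acyclic (hf2 : (SimpleGraph.fromEdgeSet (Set.range fun x => s(x, f x))).Connected)
    (hv : ∃ k, 1 ≤ k ∧ f^[k] v = v) :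
    (SimpleGraph.fromEdgeSet ((Tof f v : Finset (Sym2 V)) : Set (Sym2 V))).IsAcyclic := by
  intro a c hc
  cases c with
  | nil => exact hc.ne_nil rfl
  | @cons _ b _ h c' =>
    have key : ∀ e ∈ (SimpleGraph.Walk.cons h c').edges, ∃ z, z ≠ v ∧ s(z, f z) = e := by
      intro e he
      have h1 := SimpleGraph.Walk.edges_subset_edgeSet _ he
      rw [SimpleGraph.edgeSet_fromEdgeSet] at h1
      have h2 : e ∈ Tof f v := Finset.mem_coe.mp h1.1
      rw [Tof, Finset.mem_image] at h2
      obtain ⟨z, hz, hze⟩ := h2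
      exact ⟨z, (Finset.mem_erase.mp hz).1, hze⟩
    classical
    set zf : Sym2 V → V := fun e => if hin : ∃ z, z ≠ v ∧ s(z, f z) = e then hin.choose else v
      with hzfdef
    have hzf1 : ∀ e ∈ (SimpleGraph.Walk.cons h c').edges, zf e ≠ v ∧ s(zf e, f (zf e)) = e := by
      intro e he
      have hin := key e he
      rw [hzfdef]
      simp only [dif_pos hin]
      exact hin.choose_spec
    set E : Finset (Sym2 V) := (SimpleGraph.Walk.cons h c').edges.toFinset with hE
    have hzf1' : ∀ e ∈ E, zf e ≠ v ∧ s(zf e, f (zf e)) = e := by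
      intro e he; exact hzf1 e (List.mem_toFinset.mp he)
    set S : Finset V := c'.support.toFinset with hS
    have hnodup : c'.support.Nodup := by
      have := hc.support_nodup
      rwa [SimpleGraph.Walk.support_cons, List.tail_cons] at this
    have hEcard : E.card = c'.length + 1 := by
      rw [hE, List.toFinset_card_of_nodup hc.edges_nodup, SimpleGraph.Walk.length_edges,
        SimpleGraph.Walk.length_cons]
    have hScard : S.card = c'.length + 1 := by
      rw [hS, List.toFinset_card_of_nodup hnodup, SimpleGraph.Walk.length_support]
    have hsup : ∀ y, y ∈ (SimpleGraph.Walk.cons h c').support → y ∈ S := by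
      intro y hy
      rw [SimpleGraph.Walk.support_cons, List.mem_cons] at hy
      rw [hS, List.mem_toFinset]
      rcases hy with rfl | hy
      · exact c'.end_mem_support
      · exact hy
    have hsubset : E.image zf ⊆ S := by
      intro x hx
      rw [Finset.mem_image] at hx
      obtain ⟨e, he, rfl⟩ := hx
      have h2 := (hzf1' e he).2
      have : zf e ∈ (SimpleGraph.Walk.cons h c').support := by
        apply SimpleGraph.Walk.fst_mem_support_of_mem_edges
        rw [h2]
        exact List.mem_toFinset.mp he
      exact hsup _ this
    have hinj : Set.InjOn zf ↑E := by
      intro e1 he1 e2 he2 hz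
      rw [← (hzf1' e1 (Finset.mem_coe.mp he1)).2, ← (hzf1' e2 (Finset.mem_coe.mp he2)).2, hz]
    have himg : E.image zf = S := by
      apply Finset.eq_of_subset_of_card_le hsubset
      rw [Finset.card_image_of_injOn hinj, hEcard, hScard]
    have hinv : ∀ x ∈ S, x ≠ v ∧ f x ∈ S := by
      intro x hx
      rw [← himg, Finset.mem_image] at hx
      obtain ⟨e, he, rfl⟩ := hx
      obtain ⟨hne, heq⟩ := hzf1' e he
      refine ⟨hne, ?_⟩
      apply hsup
      apply SimpleGraph.Walk.snd_mem_support_of_mem_edges (SimpleGraph.Walk.cons h c')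
      rw [heq]
      exact List.mem_toFinset.mp he
    have haS : a ∈ S := by rw [hS, List.mem_toFinset]; exact c'.end_mem_support
    have hiter : ∀ k, f^[k] a ∈ S := by
      intro k
      induction k with
      | zero => exact haS
      | succ n ih =>
        rw [Function.iterate_succ_apply']
        exact (hinv _ ih).2
    obtain ⟨k, hk⟩ := reaches hf2 hv a
    exact (hinv _ (hk ▸ hiter k)).1 rfl

lemma Tof_subset (hf1 : ∀ x, G.Adj x (f x)) :
    ((Tof f v : Finset (Sym2 V)) : Set (Sym2 V)) ⊆ G.edgeSet := by
  intro e he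
  rw [Finset.mem_coe, Tof, Finset.mem_image] at he
  obtain ⟨x, -, rfl⟩ := he
  exact hf1 x

lemma Tof_card (hf2 : (SimpleGraph.fromEdgeSet (Set.range fun x => s(x, f x))).Connected)
    (hv : ∃ k, 1 ≤ k ∧ f^[k] v = v) :
    (Tof f v).card + 1 = Fintype.card V := by
  rw [Tof, Finset.card_image_of_injOn (fun x hx y hy => injOn_edge hf2 hv x hx y hy),
    Finset.card_erase_of_mem (Finset.mem_univ v), Finset.card_univ]
  have : 0 < Fintype.card V := Fintype.card_pos_iff.mpr ⟨v⟩
  omega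

end FSide

section TSide

/-- The parent map toward `u` in a graph `H` (meaningful when `H` is a tree). -/
noncomputable def par (H : SimpleGraph V) (u x : V) : V :=
  if h : ∃ p : H.Walk x u, p.IsPath then h.choose.getVert 1 else x

lemma par_eq {H : SimpleGraph V} (hH : H.IsAcyclic) {u x : V} (p : H.Walk x u)
    (hp : p.IsPath) : par H u x = p.getVert 1 := by
  have h : ∃ q : H.Walk x u, q.IsPath := ⟨p, hp⟩
  rw [par, dif_pos h]
  have h2 : h.choose = p :=
    congrArg Subtype.val (hH.path_unique ⟨h.choose, h.choose_spec⟩ ⟨p, hp⟩)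
  rw [h2]

/-- The adjacency map associated to a spanning tree `T`, a root `u` and target `v`. -/
noncomputable def psi (u v : V) (T : Finset (Sym2 V)) : V → V := fun x =>
  if x = u then v else par (SimpleGraph.fromEdgeSet (T : Set (Sym2 V))) u x

variable {G : SimpleGraph V} {u v : V} {T : Finset (Sym2 V)}

lemma psi_adj_tree (hT2 : (SimpleGraph.fromEdgeSet (T : Set (Sym2 V))).Connected)
    (hT3 : (SimpleGraph.fromEdgeSet (T : Set (Sym2 V))).IsAcyclic)
    {x : V} (hx : x ≠ u) :
    (SimpleGraph.fromEdgeSet (T : Set (Sym2 V))).Adj x (psi u v T x) := by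
  obtain ⟨q⟩ := hT2.preconnected x u
  have hq := q.toPath.2
  rw [psi, if_neg hx, par_eq hT3 _ hq]
  have hlen : 0 < (q.toPath : (SimpleGraph.fromEdgeSet (T : Set (Sym2 V))).Walk x u).length := by
    rw [← SimpleGraph.Walk.not_nil_iff_lt_length]
    exact SimpleGraph.Walk.not_nil_of_ne hx
  have := (q.toPath : (SimpleGraph.fromEdgeSet (T : Set (Sym2 V))).Walk x u).adj_getVert_succ hlen
  rwa [SimpleGraph.Walk.getVert_zero] at this

lemma subset_range_psi (hT1 : (T : Set (Sym2 V)) ⊆ G.edgeSet)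
    (hT2 : (SimpleGraph.fromEdgeSet (T : Set (Sym2 V))).Connected)
    (hT3 : (SimpleGraph.fromEdgeSet (T : Set (Sym2 V))).IsAcyclic) :
    (T : Set (Sym2 V)) ⊆ Set.range (fun x => s(x, psi u v T x)) := by
  intro e he
  induction e using Sym2.ind with
  | _ a b =>
  have hne : a ≠ b := by
    have h1 := hT1 he
    rw [SimpleGraph.mem_edgeSet] at h1
    exact h1.ne
  have hH : (SimpleGraph.fromEdgeSet (T : Set (Sym2 V))).Adj a b :=
    (SimpleGraph.fromEdgeSet_adj _).mpr ⟨he, hne⟩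
  by_cases hau : a = u
  · have hb : b ≠ u := fun hbb => hne (hau.trans hbb.symm)
    have hadj : (SimpleGraph.fromEdgeSet (T : Set (Sym2 V))).Adj b u := hau ▸ hH.symm
    have hpath : (SimpleGraph.Walk.cons hadj SimpleGraph.Walk.nil).IsPath := by
      rw [SimpleGraph.Walk.cons_isPath_iff]
      exact ⟨SimpleGraph.Walk.IsPath.nil, by simp [hb]⟩
    refine ⟨b, ?_⟩
    show s(b, psi u v T b) = s(a, b)
    rw [psi, if_neg hb, par_eq hT3 _ hpath]
    rw [SimpleGraph.Walk.getVert_cons_succ, SimpleGraph.Walk.getVert_zero, hau, Sym2.eq_swap]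
  by_cases hbu : b = u
  · have hadj : (SimpleGraph.fromEdgeSet (T : Set (Sym2 V))).Adj a u := hbu ▸ hH
    have hpath : (SimpleGraph.Walk.cons hadj SimpleGraph.Walk.nil).IsPath := by
      rw [SimpleGraph.Walk.cons_isPath_iff]
      exact ⟨SimpleGraph.Walk.IsPath.nil, by simp [hau]⟩
    refine ⟨a, ?_⟩
    show s(a, psi u v T a) = s(a, b)
    rw [psi, if_neg hau, par_eq hT3 _ hpath]
    rw [SimpleGraph.Walk.getVert_cons_succ, SimpleGraph.Walk.getVert_zero, hbu]
  obtain ⟨wa⟩ := hT2.preconnected a u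
  obtain ⟨wb⟩ := hT2.preconnected b u
  have hpa : (wa.toPath : (SimpleGraph.fromEdgeSet (T : Set (Sym2 V))).Walk a u).IsPath :=
    wa.toPath.2
  have hpb : (wb.toPath : (SimpleGraph.fromEdgeSet (T : Set (Sym2 V))).Walk b u).IsPath :=
    wb.toPath.2
  set pa := (wa.toPath : (SimpleGraph.fromEdgeSet (T : Set (Sym2 V))).Walk a u) with hpadef
  set pb := (wb.toPath : (SimpleGraph.fromEdgeSet (T : Set (Sym2 V))).Walk b u) with hpbdef
  by_cases hab : a ∈ pb.support
  · by_cases hba : b ∈ pa.support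
    · exfalso
      have hdrop : (pb.dropUntil a hab).IsPath := hpb.dropUntil hab
      have heq : pa = pb.dropUntil a hab :=
        congrArg Subtype.val (hT3.path_unique ⟨pa, hpa⟩ ⟨_, hdrop⟩)
      have hbd : b ∈ (pb.dropUntil a hab).support := heq ▸ hba
      have hnodup := hpb.support_nodup
      rw [← SimpleGraph.Walk.take_spec pb hab, SimpleGraph.Walk.support_append] at hnodup
      have hd := List.disjoint_of_nodup_append hnodup
      have hb1 : b ∈ (pb.takeUntil a hab).support := SimpleGraph.Walk.start_mem_support _
      have hb2 : b ∈ (pb.dropUntil a hab).support.tail := by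
        have hcons := (pb.dropUntil a hab).support_eq_cons
        rw [hcons, List.mem_cons] at hbd
        rcases hbd with h' | h'
        · exact absurd h' hne.symm
        · exact h'
      exact hd hb1 hb2
    · have hpath : (SimpleGraph.Walk.cons hH.symm pa).IsPath := hpa.cons hba
      refine ⟨b, ?_⟩
      show s(b, psi u v T b) = s(a, b)
      rw [psi, if_neg hbu, par_eq hT3 _ hpath]
      rw [SimpleGraph.Walk.getVert_cons_succ, SimpleGraph.Walk.getVert_zero, Sym2.eq_swap]
  · have hpath : (SimpleGraph.Walk.cons hH pb).IsPath := hpb.cons hab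
    refine ⟨a, ?_⟩
    show s(a, psi u v T a) = s(a, b)
    rw [psi, if_neg hau, par_eq hT3 _ hpath]
    rw [SimpleGraph.Walk.getVert_cons_succ, SimpleGraph.Walk.getVert_zero]

lemma psi_reaches_root_aux (hT3 : (SimpleGraph.fromEdgeSet (T : Set (Sym2 V))).IsAcyclic) :
    ∀ {x r : V} (p : (SimpleGraph.fromEdgeSet (T : Set (Sym2 V))).Walk x r), p.IsPath →
      ∃ k, (psi r v T)^[k] x = r := by
  intro x r p
  induction p with
  | nil => exact fun _ => ⟨0, rfl⟩
  | @cons c d r' h q ih =>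
    intro hp
    rw [SimpleGraph.Walk.cons_isPath_iff] at hp
    obtain ⟨k, hk⟩ := ih hp.1
    by_cases hcu : c = r'
    · exact ⟨0, hcu⟩
    · refine ⟨k + 1, ?_⟩
      rw [Function.iterate_succ_apply]
      have hstep : psi r' v T c = d := by
        rw [psi, if_neg hcu,
          par_eq hT3 _ ((SimpleGraph.Walk.cons_isPath_iff h q).mpr hp)]
        rw [SimpleGraph.Walk.getVert_cons_succ, SimpleGraph.Walk.getVert_zero]
      rw [hstep, hk]

lemma psi_reaches_root (hT2 : (SimpleGraph.fromEdgeSet (T : Set (Sym2 V))).Connected)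
    (hT3 : (SimpleGraph.fromEdgeSet (T : Set (Sym2 V))).IsAcyclic) (x : V) :
    ∃ k, (psi u v T)^[k] x = u := by
  obtain ⟨q⟩ := hT2.preconnected x u
  exact psi_reaches_root_aux hT3 q.toPath q.toPath.2

end TSide

section Inverses

variable {G : SimpleGraph V}

lemma psi_Tof_eq {f : V → V} {v : V} (hf1 : ∀ x, G.Adj x (f x))
    (hf2 : (SimpleGraph.fromEdgeSet (Set.range fun x => s(x, f x))).Connected)
    (hv : ∃ k, 1 ≤ k ∧ f^[k] v = v) :
    psi v (f v) (Tof f v) = f := by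
  funext x
  by_cases hx : x = v
  · subst hx
    simp [psi]
  · simp only [psi, if_neg hx]
    have hex := reaches hf2 hv x
    obtain ⟨p, hp, -, hg⟩ := exists_orbit_path (G := G) hf1 (Nat.find hex) x
      (Nat.find_spec hex) (fun j hj => Nat.find_min hex hj)
    have hkpos : 0 < Nat.find hex := by
      rcases Nat.eq_zero_or_pos (Nat.find hex) with h0 | hpos
      · exact absurd (by simpa [h0] using Nat.find_spec hex) hx
      · exact hpos
    rw [par_eq (Tof_acyclic hf2 hv) p hp, hg hkpos]

lemma Tof_psi_eq {u v : V} {T : Finset (Sym2 V)}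
    (hT1 : (T : Set (Sym2 V)) ⊆ G.edgeSet)
    (hT2 : (SimpleGraph.fromEdgeSet (T : Set (Sym2 V))).Connected)
    (hT3 : (SimpleGraph.fromEdgeSet (T : Set (Sym2 V))).IsAcyclic) :
    Tof (psi u v T) u = T := by
  have hTree : (SimpleGraph.fromEdgeSet (T : Set (Sym2 V))).IsTree := ⟨hT2, hT3⟩
  have hsub : Tof (psi u v T) u ⊆ T := by
    intro e he
    rw [Tof, Finset.mem_image] at he
    obtain ⟨x, hx, rfl⟩ := he
    have hxu := (Finset.mem_erase.mp hx).1
    have hadj := psi_adj_tree (v := v) hT2 hT3 hxu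
    have hmem : s(x, psi u v T x) ∈ (SimpleGraph.fromEdgeSet (T : Set (Sym2 V))).edgeSet := hadj
    rw [SimpleGraph.edgeSet_fromEdgeSet] at hmem
    exact Finset.mem_coe.mp hmem.1
  have hf2' : (SimpleGraph.fromEdgeSet (Set.range fun x => s(x, psi u v T x))).Connected :=
    SimpleGraph.Connected.mono
      (SimpleGraph.fromEdgeSet_mono (subset_range_psi hT1 hT2 hT3)) hT2
  have hv' : ∃ k, 1 ≤ k ∧ (psi u v T)^[k] u = u := by
    obtain ⟨k, hk⟩ := psi_reaches_root (v := v) hT2 hT3 v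
    refine ⟨k + 1, by omega, ?_⟩
    rw [Function.iterate_succ_apply]
    have hpu : psi u v T u = v := by simp [psi]
    rw [hpu, hk]
  have hcard1 : (Tof (psi u v T) u).card + 1 = Fintype.card V := Tof_card hf2' hv'
  have hef : (SimpleGraph.fromEdgeSet (↑T : Set (Sym2 V))).edgeFinset = T := by
    apply Finset.coe_injective
    rw [SimpleGraph.coe_edgeFinset, SimpleGraph.edgeSet_fromEdgeSet]
    ext e
    refine ⟨fun h => h.1, fun h => ⟨h, fun hd => ?_⟩⟩
    exact (G.not_isDiag_of_mem_edgeSet (hT1 h)) hd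
  have hcardT : T.card + 1 = Fintype.card V := by
    have h := hTree.card_edgeFinset
    rwa [hef] at h
  exact Finset.eq_of_subset_of_card_le hsub (by omega)

end Inverses

end Stmt6Aux

/-- The weighted sum `F₁(G)` of spanning trees of `G`. -/
noncomputable def treeSum {V : Type*} [Fintype V] [DecidableEq V]
    (w : V → V → ℝ) (hsym : ∀ u v, w u v = w v u) (G : SimpleGraph V) : ℝ :=
  ∑ T ∈ Finset.univ.filter (fun T : Finset (Sym2 V) =>
      (T : Set (Sym2 V)) ⊆ G.edgeSet ∧
      (SimpleGraph.fromEdgeSet (T : Set (Sym2 V))).Connected ∧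
      (SimpleGraph.fromEdgeSet (T : Set (Sym2 V))).IsAcyclic),
    ∏ e ∈ T, Sym2.lift ⟨w, hsym⟩ e

theorem stmt_6 {V : Type*} [Fintype V] [DecidableEq V]
    (hV : 1 < Fintype.card V)
    (w : V → V → ℝ) (hsym : ∀ u v, w u v = w v u)
    (hw : ∀ u v, 0 ≤ w u v) (hw0 : ∀ v, w v v = 0)
    (G : SimpleGraph V) (hG : ∀ u v, G.Adj u v ↔ u ≠ v ∧ 0 < w u v)
    (hconn : G.Connected) :
    ∑ f ∈ Finset.univ.filter (fun f : V → V =>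
        (∀ v, G.Adj v (f v)) ∧
        (SimpleGraph.fromEdgeSet (Set.range fun v => Sym2.mk v (f v))).Connected),
      (((Finset.univ.filter (fun v : V => ∃ k, 1 ≤ k ∧ f^[k] v = v)).card : ℝ) *
        ∏ v : V, w v (f v))
    = 2 * (∑ e ∈ G.edgeFinset, Sym2.lift ⟨w, hsym⟩ e) * treeSum w hsym G := by
  open Stmt6Aux in
  set F : Finset (V → V) := Finset.univ.filter (fun f : V → V =>
      (∀ v, G.Adj v (f v)) ∧
      (SimpleGraph.fromEdgeSet (Set.range fun v => Sym2.mk v (f v))).Connected) with hF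
  set P : (V → V) → Finset V :=
      fun f => Finset.univ.filter (fun v : V => ∃ k, 1 ≤ k ∧ f^[k] v = v) with hP
  set D : Finset (V × V) := Finset.univ.filter (fun p : V × V => G.Adj p.1 p.2) with hD
  set TS : Finset (Finset (Sym2 V)) := Finset.univ.filter (fun T : Finset (Sym2 V) =>
      (T : Set (Sym2 V)) ⊆ G.edgeSet ∧
      (SimpleGraph.fromEdgeSet (T : Set (Sym2 V))).Connected ∧
      (SimpleGraph.fromEdgeSet (T : Set (Sym2 V))).IsAcyclic) with hTS
  have hle : SimpleGraph.fromEdgeSet (G.edgeSet) = G := SimpleGraph.fromEdgeSet_edgeSet G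
  -- the bijection
  have key : ∑ q ∈ F.sigma P, (∏ x : V, w x (q.1 x))
      = ∑ r ∈ D ×ˢ TS, w r.1.1 r.1.2 * ∏ e ∈ r.2, Sym2.lift ⟨w, hsym⟩ e := by
    refine Finset.sum_bij'
      (fun (q : (_ : V → V) × V) (_ : q ∈ F.sigma P) => ((q.2, q.1 q.2), Tof q.1 q.2))
      (fun (r : (V × V) × Finset (Sym2 V)) (_ : r ∈ D ×ˢ TS) => ⟨psi r.1.1 r.1.2 r.2, r.1.1⟩)
      ?_ ?_ ?_ ?_ ?_
    · -- maps into D ×ˢ TS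
      rintro ⟨f, v⟩ hq
      rw [Finset.mem_sigma, hF, hP, Finset.mem_filter, Finset.mem_filter] at hq
      obtain ⟨⟨-, hf1, hf2⟩, -, hv⟩ := hq
      rw [Finset.mem_product, hD, hTS, Finset.mem_filter, Finset.mem_filter]
      exact ⟨⟨Finset.mem_univ _, hf1 v⟩, Finset.mem_univ _,
        Tof_subset hf1, Tof_connected hf1 hf2 hv, Tof_acyclic hf2 hv⟩
    · -- maps back into the sigma set
      rintro ⟨⟨u, v⟩, T⟩ hr
      rw [Finset.mem_product, hD, hTS, Finset.mem_filter, Finset.mem_filter] at hr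
      obtain ⟨⟨-, hadj⟩, -, hT1, hT2, hT3⟩ := hr
      have hGle : SimpleGraph.fromEdgeSet (T : Set (Sym2 V)) ≤ G :=
        hle ▸ SimpleGraph.fromEdgeSet_mono hT1
      rw [Finset.mem_sigma, hF, hP, Finset.mem_filter, Finset.mem_filter]
      refine ⟨⟨Finset.mem_univ _, ?_, ?_⟩, Finset.mem_univ _, ?_⟩
      · intro x
        by_cases hxu : x = u
        · subst hxu
          simpa [psi] using hadj
        · exact hGle (psi_adj_tree (v := v) hT2 hT3 hxu)
      · exact SimpleGraph.Connected.mono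
          (SimpleGraph.fromEdgeSet_mono (subset_range_psi hT1 hT2 hT3)) hT2
      · show ∃ k, 1 ≤ k ∧ (psi u v T)^[k] u = u
        obtain ⟨k, hk⟩ := psi_reaches_root (v := v) hT2 hT3 v
        refine ⟨k + 1, by omega, ?_⟩
        rw [Function.iterate_succ_apply]
        have hpu : psi u v T u = v := by simp [psi]
        rw [hpu, hk]
    · -- left inverse
      rintro ⟨f, v⟩ hq
      rw [Finset.mem_sigma, hF, hP, Finset.mem_filter, Finset.mem_filter] at hq
      obtain ⟨⟨-, hf1, hf2⟩, -, hv⟩ := hq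
      simp only
      rw [psi_Tof_eq hf1 hf2 hv]
    · -- right inverse
      rintro ⟨⟨u, v⟩, T⟩ hr
      rw [Finset.mem_product, hD, hTS, Finset.mem_filter, Finset.mem_filter] at hr
      obtain ⟨⟨-, hadj⟩, -, hT1, hT2, hT3⟩ := hr
      simp only
      rw [Tof_psi_eq hT1 hT2 hT3, show psi u v T u = v by simp [psi]]
    · -- weights agree
      rintro ⟨f, v⟩ hq
      rw [Finset.mem_sigma, hF, hP, Finset.mem_filter, Finset.mem_filter] at hq
      obtain ⟨⟨-, hf1, hf2⟩, -, hv⟩ := hq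
      simp only
      rw [← Finset.mul_prod_erase Finset.univ (fun x => w x (f x)) (Finset.mem_univ v)]
      congr 1
      rw [Tof, Finset.prod_image (injOn_edge hf2 hv)]
      apply Finset.prod_congr rfl
      intro x _
      rw [Sym2.lift_mk]
  -- counting directed edges
  have hpair : ∑ p ∈ D, w p.1 p.2 = 2 * ∑ e ∈ G.edgeFinset, Sym2.lift ⟨w, hsym⟩ e := by
    rw [Finset.mul_sum]
    have hmaps : ∀ p ∈ D, s(p.1, p.2) ∈ G.edgeFinset := by
      rintro ⟨a, b⟩ hp
      rw [hD, Finset.mem_filter] at hp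
      rw [SimpleGraph.mem_edgeFinset, SimpleGraph.mem_edgeSet]
      exact hp.2
    rw [← Finset.sum_fiberwise_of_maps_to hmaps (fun p => w p.1 p.2)]
    apply Finset.sum_congr rfl
    intro e he
    induction e using Sym2.ind with
    | _ a b =>
      rw [SimpleGraph.mem_edgeFinset, SimpleGraph.mem_edgeSet] at he
      have hfe : D.filter (fun p => s(p.1, p.2) = s(a, b)) = {(a, b), (b, a)} := by
        ext ⟨c, d⟩
        rw [Finset.mem_filter, hD, Finset.mem_filter]
        simp only [Finset.mem_univ, true_and, Finset.mem_insert, Finset.mem_singleton,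
          Prod.mk.injEq, Sym2.eq_iff]
        constructor
        · rintro ⟨-, h⟩
          exact h
        · rintro (⟨rfl, rfl⟩ | ⟨rfl, rfl⟩)
          · exact ⟨he, Or.inl ⟨rfl, rfl⟩⟩
          · exact ⟨he.symm, Or.inr ⟨rfl, rfl⟩⟩
      rw [hfe, Finset.sum_insert (by
        rw [Finset.mem_singleton]
        intro h
        exact G.ne_of_adj he (congrArg Prod.fst h)), Finset.sum_singleton]
      rw [Sym2.lift_mk]
      rw [hsym b a]
      ring
  -- assemble
  calc
    ∑ f ∈ F, (((P f).card : ℝ) * ∏ v : V, w v (f v))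
        = ∑ f ∈ F, ∑ _v ∈ P f, ∏ x : V, w x (f x) := by
          apply Finset.sum_congr rfl
          intro f _
          rw [Finset.sum_const, nsmul_eq_mul]
    _ = ∑ q ∈ F.sigma P, (∏ x : V, w x (q.1 x)) := Finset.sum_sigma' F P _
    _ = ∑ r ∈ D ×ˢ TS, w r.1.1 r.1.2 * ∏ e ∈ r.2, Sym2.lift ⟨w, hsym⟩ e := key
    _ = ∑ p ∈ D, ∑ T ∈ TS, w p.1 p.2 * ∏ e ∈ T, Sym2.lift ⟨w, hsym⟩ e := by
          rw [Finset.sum_product]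
    _ = ∑ p ∈ D, w p.1 p.2 * ∑ T ∈ TS, ∏ e ∈ T, Sym2.lift ⟨w, hsym⟩ e := by
          apply Finset.sum_congr rfl
          intro p _
          rw [Finset.mul_sum]
    _ = (∑ p ∈ D, w p.1 p.2) * ∑ T ∈ TS, ∏ e ∈ T, Sym2.lift ⟨w, hsym⟩ e :=
          (Finset.sum_mul _ _ _).symm
    _ = 2 * (∑ e ∈ G.edgeFinset, Sym2.lift ⟨w, hsym⟩ e) * treeSum w hsym G := by
          rw [hpair]
          rfl
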